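/- Let I be a finite index set, let (X_i)_{i∈I} be independent random variables on a probability space taking values in {0,1} with P(X_i = 1) = μ_i, and let δ_i ∈ [0,1] be real numbers for i ∈ I. If ∑_{i∈I} δ_i·μ_i ≥ 6, then the random variable Z = ∑_{i∈I} δ_i·X_i satisfies P(Z < 2) ≤ 3/8. -/

import Mathlib

open MeasureTheory ProbabilityTheory

/-- If `(X i)` are independent `{0,1}`-valued random variables with `P(X i = 1) = p i`,
`δ i ∈ Set.Icc (0 : ℝ) 1`, and `∑ i, δ i * p i ≥ 6`, then `Z = ∑ i, δ i * X i` satisfies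
`P(Z < 2) ≤ 3/8`. -/
theorem stmt0 {Ω : Type*} [MeasurableSpace Ω] (μ : Measure Ω) [IsProbabilityMeasure μ]
    {I : Type*} [Fintype I]
    (X : I → Ω → ℝ) (hmeas : ∀ i, Measurable (X i))
    (h01 : ∀ i ω, X i ω = 0 ∨ X i ω = 1)
    (hind : iIndepFun X μ)
    (p : I → ℝ) (hp : ∀ i, (μ {ω | X i ω = 1}).toReal = p i)
    (δ : I → ℝ) (hδ : ∀ i, δ i ∈ Set.Icc (0 : ℝ) 1)
    (hsum : 6 ≤ ∑ i, δ i * p i) :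
    (μ {ω | ∑ i, δ i * X i ω < 2}).toReal ≤ 3 / 8 := by
  classical
  set m : ℝ := ∑ i, δ i * p i with hm
  set Y : I → Ω → ℝ := fun i ω => δ i * X i ω with hY
  have hYmeas : ∀ i, Measurable (Y i) := fun i => (hmeas i).const_mul _
  -- each X i equals the indicator of {X i = 1}
  have hXind : ∀ i, X i = Set.indicator {ω | X i ω = 1} 1 := by
    intro i
    funext ω
    rcases h01 i ω with h | h <;>
      simp [Set.indicator_apply, Set.mem_setOf_eq, h]
  have hsetmeas : ∀ i, MeasurableSet {ω | X i ω = 1} :=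
    fun i => (hmeas i) (measurableSet_singleton 1)
  have hpnn : ∀ i, 0 ≤ p i := fun i => (hp i) ▸ ENNReal.toReal_nonneg
  have hp1 : ∀ i, p i ≤ 1 := by
    intro i
    rw [← hp i]
    exact ENNReal.toReal_le_of_le_ofReal one_pos.le (by simpa using prob_le_one)
  -- integrals
  have hintX : ∀ i, ∫ ω, X i ω ∂μ = p i := by
    intro i
    rw [← hp i]
    calc ∫ ω, X i ω ∂μ = ∫ ω, Set.indicator {ω | X i ω = 1} 1 ω ∂μ := by rw [← hXind i]
    _ = (μ {ω | X i ω = 1}).toReal := integral_indicator_one (hsetmeas i)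
  have hXsq : ∀ i ω, X i ω ^ 2 = X i ω := by
    intro i ω; rcases h01 i ω with h | h <;> simp [h]
  -- Memℒp
  have hmem : ∀ i, MemLp (X i) 2 μ := by
    intro i
    apply MemLp.of_bound ((hmeas i).aestronglyMeasurable) 1
    filter_upwards with ω
    rcases h01 i ω with h | h <;> simp [h]
  have hmemY : ∀ i, MemLp (Y i) 2 μ := fun i => (hmem i).const_mul (δ i)
  have hintY : ∀ i, Integrable (Y i) μ := fun i => (hmemY i).integrable one_le_two
  -- independence of Y
  have hindY : iIndepFun Y μ := by
    have := hind.comp (fun i => fun x : ℝ => δ i * x) (fun i => measurable_const_mul _)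
    exact this
  -- Z
  set Z : Ω → ℝ := fun ω => ∑ i, δ i * X i ω with hZ
  have hZeq : Z = ∑ i, Y i := by
    funext ω; simp [hZ, hY, Finset.sum_apply]
  have hmemZ : MemLp Z 2 μ := by
    rw [hZeq]; exact memLp_finset_sum' _ (fun i _ => hmemY i)
  -- E[Z] = m
  have hEZ : μ[Z] = m := by
    rw [hZeq]
    simp only [Finset.sum_apply]
    rw [integral_finset_sum _ (fun i _ => hintY i)]
    refine Finset.sum_congr rfl fun i _ => ?_
    simp only [hY]
    rw [integral_const_mul, hintX i]
  -- variance bounds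
  have hvarX : ∀ i, variance (X i) μ = p i - p i ^ 2 := by
    intro i
    rw [variance_eq_sub (hmem i)]
    have hsq : μ[X i ^ 2] = p i := by
      rw [show (X i ^ 2 : Ω → ℝ) = X i from funext fun ω => hXsq i ω, hintX i]
    rw [hsq, hintX i]
  have hvarY : ∀ i, variance (Y i) μ ≤ δ i * p i := by
    intro i
    have h1 : Y i = δ i • X i := by funext ω; simp [hY]
    rw [h1, variance_smul, hvarX i]
    obtain ⟨hδ0, hδ1⟩ := hδ i
    nlinarith [mul_nonneg (mul_nonneg hδ0 (by linarith : (0:ℝ) ≤ 1 - δ i)) (hpnn i),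
      sq_nonneg (δ i * p i)]
  have hvarZ : variance Z μ ≤ m := by
    rw [hZeq, IndepFun.variance_sum (fun i _ => hmemY i)
      (fun i _ j _ hij => hindY.indepFun hij)]
    exact Finset.sum_le_sum fun i _ => hvarY i
  have hvarZ0 : 0 ≤ variance Z μ := variance_nonneg _ _
  -- Chebyshev
  have hc : (0 : ℝ) < m - 2 := by linarith
  have hcheb := meas_ge_le_variance_div_sq hmemZ hc
  have hsub : {ω | Z ω < 2} ⊆ {ω | m - 2 ≤ |Z ω - μ[Z]|} := by
    intro ω hω
    simp only [Set.mem_setOf_eq] at hω ⊢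
    rw [hEZ, abs_sub_comm]
    rw [le_abs]
    left; linarith
  have hmono : μ {ω | Z ω < 2} ≤ μ {ω | m - 2 ≤ |Z ω - μ[Z]|} := measure_mono hsub
  have key : (μ {ω | Z ω < 2}).toReal ≤ variance Z μ / (m - 2) ^ 2 := by
    refine ENNReal.toReal_le_of_le_ofReal (by positivity) (le_trans hmono hcheb)
  have hrw : {ω | ∑ i, δ i * X i ω < 2} = {ω | Z ω < 2} := rfl
  rw [hrw]
  refine key.trans ?_
  have h1 : variance Z μ / (m - 2) ^ 2 ≤ m / (m - 2) ^ 2 := by gcongr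
  have h2 : m / (m - 2) ^ 2 ≤ 3 / 8 := by
    rw [div_le_div_iff₀ (by positivity) (by norm_num)]
    nlinarith
  linarith
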